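/- (The regularized approximation of the homogenized coefficient converges from above, with error given by the energy of the gradient difference.) Let Φ ∈ L²(Ω,ℙ;ℝ^d) be the limit in L²(Ω,ℙ;ℝ^d) of Dφ_μ as μ → 0⁺ (which exists). Then for every μ > 0: E[(ξ + Dφ_μ) · A(ξ + Dφ_μ)] − E[(ξ + Φ) · A(ξ + Φ)] = E[(Dφ_μ − Φ) · A(Dφ_μ − Φ)]; in particular E[(ξ + Dφ_μ) · A(ξ + Dφ_μ)] ≥ E[(ξ + Φ) · A(ξ + Φ)], i.e. the approximation ξ·A_μξ approaches ξ·A_hom ξ from above. -/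

import Mathlib

open MeasureTheory

open Filter
set_option synthInstance.maxHeartbeats 1000000
set_option maxHeartbeats 1000000

namespace StochHom

/-- Edges of `ℤ^d`, indexed by their base vertex and their direction:
the pair `(x, i)` represents the edge `(x, x + eᵢ)`. -/
abbrev Edge (d : ℕ) := (Fin d → ℤ) × Fin d

/-- Environments: conductance functions `ω : 𝔹 → ℝ` (with values in `[α,β]`). -/
abbrev Env (d : ℕ) := Edge d → ℝ

/-- The coordinate unit vector `eᵢ` of `ℤ^d`. -/
def unit {d : ℕ} (i : Fin d) : Fin d → ℤ := Pi.single i 1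

/-- The shift `θ_z` of the environment: `(θ_z ω)_{(x,y)} = ω_{(x+z,y+z)}`. -/
def shift {d : ℕ} (z : Fin d → ℤ) (ω : Env d) : Env d :=
  fun e => ω (e.1 + z, e.2)

/-- Forward difference `Dᵢψ(ω) = ψ(θ_{eᵢ}ω) − ψ(ω)`. -/
def Dgrad {d : ℕ} (ψ : Env d → ℝ) (i : Fin d) (ω : Env d) : ℝ :=
  ψ (shift (unit i) ω) - ψ ω

/-- Backward difference `Dᵢ*ψ(ω) = ψ(ω) − ψ(θ_{−eᵢ}ω)`. -/
def DgradStar {d : ℕ} (ψ : Env d → ℝ) (i : Fin d) (ω : Env d) : ℝ :=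
  ψ ω - ψ (shift (-unit i) ω)

/-- The operator `𝓛ψ(ω) = Σ_{z∼0} ω_{(0,z)} (ψ(ω) − ψ(θ_z ω))`, the sum running over the
`2d` nearest neighbors `z` of `0` in `ℤ^d`.  The conductance of the edge `(0, eᵢ)` is
`ω (0, i)` and that of the edge `(0, −eᵢ)` is `ω (−eᵢ, i)`. -/
def genL {d : ℕ} (ψ : Env d → ℝ) (ω : Env d) : ℝ :=
  ∑ i : Fin d,
    (ω (0, i) * (ψ ω - ψ (shift (unit i) ω))
      + ω (-unit i, i) * (ψ ω - ψ (shift (-unit i) ω)))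

/-- The local drift `𝔡(ω) = Σ_{z∼0} ω_{(0,z)} (ξ·z)` in the direction `ξ`. -/
def drift {d : ℕ} (ξ : Fin d → ℝ) (ω : Env d) : ℝ :=
  ∑ i : Fin d, (ω (0, i) * ξ i + ω (-unit i, i) * (-ξ i))


/- ### auxiliary lemmas -/

section Aux

lemma measurable_shift {d : ℕ} (z : Fin d → ℤ) : Measurable (shift (d := d) z) :=
  measurable_pi_lambda _ fun _ => measurable_pi_apply _

@[simp] lemma shift_shift {d : ℕ} (z w : Fin d → ℤ) (ω : Env d) :
    shift z (shift w ω) = shift (z + w) ω := by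
  funext e; simp [shift, add_assoc]

@[simp] lemma shift_zero {d : ℕ} (ω : Env d) : shift 0 ω = ω := by
  funext e; simp [shift]

@[simp] lemma shift_apply {d : ℕ} (z : Fin d → ℤ) (ω : Env d) (x : Fin d → ℤ) (i : Fin d) :
    shift z ω (x, i) = ω (x + z, i) := rfl

def shiftEquiv {d : ℕ} (z : Fin d → ℤ) : Env d ≃ᵐ Env d where
  toFun := shift z
  invFun := shift (-z)
  left_inv ω := by simp
  right_inv ω := by simp
  measurable_toFun := measurable_shift z
  measurable_invFun := measurable_shift (-z)

variable {d : ℕ} {P : Measure (Env d)}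

lemma integral_shift (hshift : ∀ z : Fin d → ℤ, MeasurePreserving (shift z) P P)
    (z : Fin d → ℤ) (F : Env d → ℝ) :
    ∫ ω, F (shift z ω) ∂P = ∫ ω, F ω ∂P :=
  (hshift z).integral_comp (shiftEquiv z).measurableEmbedding F

lemma memLp_shift (hshift : ∀ z : Fin d → ℤ, MeasurePreserving (shift z) P P)
    {u : Env d → ℝ} (hu : MemLp u 2 P) (z : Fin d → ℤ) :
    MemLp (fun ω => u (shift z ω)) 2 P :=
  hu.comp_measurePreserving (hshift z)

lemma memLp_Dgrad (hshift : ∀ z : Fin d → ℤ, MeasurePreserving (shift z) P P)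
    {u : Env d → ℝ} (hu : MemLp u 2 P) (i : Fin d) :
    MemLp (Dgrad u i) 2 P :=
  (memLp_shift hshift hu (unit i)).sub hu

lemma mul_integrable {f g : Env d → ℝ} (hf : MemLp f 2 P) (hg : MemLp g 2 P) :
    Integrable (fun x => f x * g x) P := by
  have h1 : Integrable (fun x => (f x ^ 2 + g x ^ 2) / 2) P :=
    (hf.integrable_sq.add hg.integrable_sq).div_const 2
  refine h1.mono' (hf.aestronglyMeasurable.mul hg.aestronglyMeasurable) ?_
  refine Filter.Eventually.of_forall fun x => ?_
  rw [Real.norm_eq_abs, abs_mul]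
  nlinarith [sq_nonneg (|f x| - |g x|), abs_nonneg (f x), abs_nonneg (g x),
    sq_abs (f x), sq_abs (g x)]

lemma abs_mul_le_param {a b t : ℝ} (ht : 0 < t) :
    |a| * |b| ≤ (t * a^2 + (1/t) * b^2) / 2 := by
  have key : t * a^2 - 2*(|a| * |b|) + t⁻¹ * b^2 = (t*|a| - |b|)^2 / t := by
    field_simp
    linear_combination (-(t^2)) * (sq_abs a) - (sq_abs b)
  have key2 : 0 ≤ t * a^2 - 2*(|a| * |b|) + t⁻¹ * b^2 := by
    rw [key]; positivity
  rw [one_div]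
  linarith

lemma integral_abs_mul_le_param {f g : Env d → ℝ} (hf : MemLp f 2 P) (hg : MemLp g 2 P)
    {t : ℝ} (ht : 0 < t) :
    ∫ x, |f x| * |g x| ∂P ≤ (t * ∫ x, f x ^ 2 ∂P + (1/t) * ∫ x, g x ^ 2 ∂P) / 2 := by
  have h2 : Integrable (fun x => |f x| * |g x|) P := by
    simpa [abs_mul] using (mul_integrable hf hg).abs
  calc ∫ x, |f x| * |g x| ∂P
      ≤ ∫ x, (t * f x ^ 2 + (1/t) * g x ^ 2) / 2 ∂P :=
        integral_mono h2 (((hf.integrable_sq.const_mul t).add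
          (hg.integrable_sq.const_mul (1/t))).div_const 2) fun x => abs_mul_le_param ht
    _ = (t * ∫ x, f x ^ 2 ∂P + (1/t) * ∫ x, g x ^ 2 ∂P) / 2 := by
        rw [integral_div, integral_add (hf.integrable_sq.const_mul t)
          (hg.integrable_sq.const_mul (1/t)), integral_const_mul, integral_const_mul]

lemma abs_integral_mul_le_param {f g : Env d → ℝ} (hf : MemLp f 2 P) (hg : MemLp g 2 P)
    {t : ℝ} (ht : 0 < t) :
    |∫ x, f x * g x ∂P| ≤ (t * ∫ x, f x ^ 2 ∂P + (1/t) * ∫ x, g x ^ 2 ∂P) / 2 := by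
  have habs : |∫ x, f x * g x ∂P| ≤ ∫ x, |f x| * |g x| ∂P := by
    have := norm_integral_le_integral_norm (fun x => f x * g x) (μ := P)
    simpa [Real.norm_eq_abs, abs_mul] using this
  exact habs.trans (integral_abs_mul_le_param hf hg ht)

variable {α β : ℝ}

lemma coord_bound (hα : 0 < α) (hαβ : α ≤ β)
    (hsupp : ∀ᵐ ω ∂P, ∀ e, ω e ∈ Set.Icc α β) (e : Edge d) :
    ∀ᵐ ω ∂P, ‖ω e‖ ≤ β := by
  filter_upwards [hsupp] with ω h
  have := h e
  rw [Real.norm_eq_abs, abs_le]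
  exact ⟨by linarith [this.1, this.2], this.2⟩

lemma wmul_integrable (hα : 0 < α) (hαβ : α ≤ β)
    (hsupp : ∀ᵐ ω ∂P, ∀ e, ω e ∈ Set.Icc α β) (e : Edge d)
    {u v : Env d → ℝ} (hu : MemLp u 2 P) (hv : MemLp v 2 P) :
    Integrable (fun ω => ω e * (u ω * v ω)) P :=
  (mul_integrable hu hv).bdd_mul ((measurable_pi_apply e).aestronglyMeasurable)
    (coord_bound hα hαβ hsupp e)

lemma abs_integral_wmul_le_param (hα : 0 < α) (hαβ : α ≤ β)
    (hsupp : ∀ᵐ ω ∂P, ∀ e, ω e ∈ Set.Icc α β) (e : Edge d)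
    {u v : Env d → ℝ} (hu : MemLp u 2 P) (hv : MemLp v 2 P) {t : ℝ} (ht : 0 < t) :
    |∫ ω, ω e * (u ω * v ω) ∂P|
      ≤ β * ((t * ∫ x, u x ^ 2 ∂P + (1/t) * ∫ x, v x ^ 2 ∂P) / 2) := by
  have h2 : Integrable (fun x => |u x| * |v x|) P := by
    simpa [abs_mul] using (mul_integrable hu hv).abs
  have hβ : 0 ≤ β := le_trans hα.le hαβ
  have habs : |∫ ω, ω e * (u ω * v ω) ∂P| ≤ ∫ ω, β * (|u ω| * |v ω|) ∂P := by
    have h3 := norm_integral_le_integral_norm (fun ω => ω e * (u ω * v ω)) (μ := P)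
    simp only [Real.norm_eq_abs] at h3
    refine h3.trans (integral_mono_ae ((wmul_integrable hα hαβ hsupp e hu hv).abs)
      (h2.const_mul β) ?_)
    filter_upwards [coord_bound hα hαβ hsupp e] with ω hb
    rw [abs_mul, abs_mul]
    exact mul_le_mul_of_nonneg_right (by simpa [Real.norm_eq_abs] using hb)
      (by positivity)
  rw [integral_const_mul] at habs
  exact habs.trans (mul_le_mul_of_nonneg_left (integral_abs_mul_le_param hu hv ht) hβ)

end Aux

section Weak

variable {d : ℕ} {α β : ℝ} {P : Measure (Env d)} [IsProbabilityMeasure P]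

/-- The weak formulation of the corrector equation: for every `ψ ∈ L²`,
`μ ∫ f ψ + ∑ᵢ ∫ ω(0,i) (ξᵢ + Dᵢf) Dᵢψ = 0`. -/
lemma weak_form (hα : 0 < α) (hαβ : α ≤ β)
    (hsupp : ∀ᵐ ω ∂P, ∀ e, ω e ∈ Set.Icc α β)
    (hshift : ∀ z : Fin d → ℤ, MeasurePreserving (shift z) P P)
    (ξ : Fin d → ℝ) {μ : ℝ} {f : Env d → ℝ} (hf : MemLp f 2 P)
    (heq : ∀ᵐ ω ∂P, μ * f ω + genL f ω = drift ξ ω)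
    {ψ : Env d → ℝ} (hψ : MemLp ψ 2 P) :
    μ * (∫ ω, f ω * ψ ω ∂P)
      + ∑ i : Fin d, ∫ ω, ω (0, i) * ((ξ i + Dgrad f i ω) * Dgrad ψ i ω) ∂P = 0 := by
  have hfs : ∀ z, MemLp (fun ω => f (shift z ω)) 2 P := fun z => memLp_shift hshift hf z
  have hψs : ∀ z, MemLp (fun ω => ψ (shift z ω)) 2 P := fun z => memLp_shift hshift hψ z
  have hconst : ∀ c : ℝ, MemLp (fun _ : Env d => c) 2 P := fun c => memLp_const c
  -- elementary integrability facts
  have hint1 : ∀ i : Fin d,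
      Integrable (fun ω => ω (0, i) * ((f ω - f (shift (unit i) ω)) * ψ ω)) P :=
    fun i => wmul_integrable hα hαβ hsupp _ (hf.sub (hfs _)) hψ
  have hint2 : ∀ i : Fin d,
      Integrable (fun ω => ω (-unit i, i) * ((f ω - f (shift (-unit i) ω)) * ψ ω)) P :=
    fun i => wmul_integrable hα hαβ hsupp _ (hf.sub (hfs _)) hψ
  have hint2' : ∀ i : Fin d,
      Integrable (fun ω => ω (0, i) * ((f (shift (unit i) ω) - f ω) * ψ (shift (unit i) ω))) P :=
    fun i => wmul_integrable hα hαβ hsupp _ ((hfs _).sub hf) (hψs _)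
  have hint3 : ∀ i : Fin d,
      Integrable (fun ω => ω (0, i) * (ξ i * ψ ω)) P :=
    fun i => wmul_integrable hα hαβ hsupp _ (hconst _) hψ
  have hint4 : ∀ i : Fin d,
      Integrable (fun ω => ω (-unit i, i) * ((-ξ i) * ψ ω)) P :=
    fun i => wmul_integrable hα hαβ hsupp _ (hconst _) hψ
  have hint4' : ∀ i : Fin d,
      Integrable (fun ω => ω (0, i) * ((-ξ i) * ψ (shift (unit i) ω))) P :=
    fun i => wmul_integrable hα hαβ hsupp _ (hconst _) (hψs _)
  have hintDD : ∀ i : Fin d,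
      Integrable (fun ω => ω (0, i) * (Dgrad f i ω * Dgrad ψ i ω)) P :=
    fun i => wmul_integrable hα hαβ hsupp _ (memLp_Dgrad hshift hf i) (memLp_Dgrad hshift hψ i)
  have hintxD : ∀ i : Fin d,
      Integrable (fun ω => ω (0, i) * (ξ i * Dgrad ψ i ω)) P :=
    fun i => wmul_integrable hα hαβ hsupp _ (hconst _) (memLp_Dgrad hshift hψ i)
  have hintfψ : Integrable (fun ω => f ω * ψ ω) P := mul_integrable hf hψ
  have hintsum : ∀ i : Fin d, Integrable (fun ω => ω (0, i) * ((f ω - f (shift (unit i) ω)) * ψ ω)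
      + ω (-unit i, i) * ((f ω - f (shift (-unit i) ω)) * ψ ω)) P :=
    fun i => (hint1 i).add (hint2 i)
  have hintsum' : ∀ i : Fin d, Integrable (fun ω => ω (0, i) * (ξ i * ψ ω)
      + ω (-unit i, i) * ((-ξ i) * ψ ω)) P :=
    fun i => (hint3 i).add (hint4 i)
  -- Step A : test the equation with ψ
  have hA : ∫ ω, (μ * f ω + genL f ω) * ψ ω ∂P = ∫ ω, drift ξ ω * ψ ω ∂P := by
    refine integral_congr_ae ?_
    filter_upwards [heq] with ω h
    rw [h]
  -- Step B : expand the left-hand side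
  have hB : ∫ ω, (μ * f ω + genL f ω) * ψ ω ∂P
      = μ * (∫ ω, f ω * ψ ω ∂P)
        + ∑ i : Fin d, ((∫ ω, ω (0, i) * ((f ω - f (shift (unit i) ω)) * ψ ω) ∂P)
            + ∫ ω, ω (-unit i, i) * ((f ω - f (shift (-unit i) ω)) * ψ ω) ∂P) := by
    have hptw : (fun ω => (μ * f ω + genL f ω) * ψ ω)
        = fun ω => μ * (f ω * ψ ω)
          + ∑ i : Fin d, (ω (0, i) * ((f ω - f (shift (unit i) ω)) * ψ ω)
            + ω (-unit i, i) * ((f ω - f (shift (-unit i) ω)) * ψ ω)) := by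
      funext ω
      rw [genL, add_mul, Finset.sum_mul, mul_assoc]
      congr 1
      refine Finset.sum_congr rfl fun i _ => ?_
      ring
    have hs : (∫ ω, ∑ i : Fin d, (ω (0, i) * ((f ω - f (shift (unit i) ω)) * ψ ω)
            + ω (-unit i, i) * ((f ω - f (shift (-unit i) ω)) * ψ ω)) ∂P)
        = ∑ i : Fin d, ((∫ ω, ω (0, i) * ((f ω - f (shift (unit i) ω)) * ψ ω) ∂P)
            + ∫ ω, ω (-unit i, i) * ((f ω - f (shift (-unit i) ω)) * ψ ω) ∂P) :=
      (integral_finset_sum Finset.univ (fun i _ => (hint1 i).add (hint2 i))).trans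
        (Finset.sum_congr rfl fun i _ => integral_add (hint1 i) (hint2 i))
    calc ∫ ω, (μ * f ω + genL f ω) * ψ ω ∂P
        = ∫ ω, (μ * (f ω * ψ ω)
            + ∑ i : Fin d, (ω (0, i) * ((f ω - f (shift (unit i) ω)) * ψ ω)
              + ω (-unit i, i) * ((f ω - f (shift (-unit i) ω)) * ψ ω))) ∂P := by rw [hptw]
      _ = (∫ ω, μ * (f ω * ψ ω) ∂P)
            + ∫ ω, ∑ i : Fin d, (ω (0, i) * ((f ω - f (shift (unit i) ω)) * ψ ω)
              + ω (-unit i, i) * ((f ω - f (shift (-unit i) ω)) * ψ ω)) ∂P :=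
          integral_add (hintfψ.const_mul μ) (integrable_finset_sum _ (fun i _ => hintsum i))
      _ = μ * (∫ ω, f ω * ψ ω ∂P)
            + ∑ i : Fin d, ((∫ ω, ω (0, i) * ((f ω - f (shift (unit i) ω)) * ψ ω) ∂P)
              + ∫ ω, ω (-unit i, i) * ((f ω - f (shift (-unit i) ω)) * ψ ω) ∂P) := by
          rw [integral_const_mul, hs]
  -- Step C : integration by parts on the reflected terms
  have hC : ∀ i : Fin d,
      ∫ ω, ω (-unit i, i) * ((f ω - f (shift (-unit i) ω)) * ψ ω) ∂P
        = ∫ ω, ω (0, i) * ((f (shift (unit i) ω) - f ω) * ψ (shift (unit i) ω)) ∂P := by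
    intro i
    have h := integral_shift hshift (unit i)
      (fun ω => ω (-unit i, i) * ((f ω - f (shift (-unit i) ω)) * ψ ω))
    rw [← h]
    refine integral_congr_ae (Filter.Eventually.of_forall fun ω => ?_)
    simp
  -- Step D : combine the two gradient terms
  have hD : ∀ i : Fin d,
      (∫ ω, ω (0, i) * ((f ω - f (shift (unit i) ω)) * ψ ω) ∂P)
        + ∫ ω, ω (0, i) * ((f (shift (unit i) ω) - f ω) * ψ (shift (unit i) ω)) ∂P
      = ∫ ω, ω (0, i) * (Dgrad f i ω * Dgrad ψ i ω) ∂P := by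
    intro i
    rw [← integral_add (hint1 i) (hint2' i)]
    refine integral_congr_ae (Filter.Eventually.of_forall fun ω => ?_)
    simp only [Dgrad]
    ring
  -- Step E : expand the right-hand side (drift) and integrate by parts
  have hE : ∫ ω, drift ξ ω * ψ ω ∂P
      = - ∑ i : Fin d, ∫ ω, ω (0, i) * (ξ i * Dgrad ψ i ω) ∂P := by
    have hptw : (fun ω => drift ξ ω * ψ ω)
        = fun ω => ∑ i : Fin d, (ω (0, i) * (ξ i * ψ ω)
            + ω (-unit i, i) * ((-ξ i) * ψ ω)) := by
      funext ω
      rw [drift, Finset.sum_mul]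
      refine Finset.sum_congr rfl fun i _ => ?_
      ring
    have hs' : (∫ ω, ∑ i : Fin d, (ω (0, i) * (ξ i * ψ ω)
            + ω (-unit i, i) * ((-ξ i) * ψ ω)) ∂P)
        = ∑ i : Fin d, ((∫ ω, ω (0, i) * (ξ i * ψ ω) ∂P)
            + ∫ ω, ω (-unit i, i) * ((-ξ i) * ψ ω) ∂P) :=
      (integral_finset_sum Finset.univ (fun i _ => (hint3 i).add (hint4 i))).trans
        (Finset.sum_congr rfl fun i _ => integral_add (hint3 i) (hint4 i))
    have hstep : ∫ ω, drift ξ ω * ψ ω ∂P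
        = ∑ i : Fin d, ((∫ ω, ω (0, i) * (ξ i * ψ ω) ∂P)
            + ∫ ω, ω (-unit i, i) * ((-ξ i) * ψ ω) ∂P) := by
      rw [hptw]
      exact (integral_finset_sum Finset.univ (fun i _ => hintsum' i)).trans
        (Finset.sum_congr rfl fun i _ => integral_add (hint3 i) (hint4 i))
    rw [hstep, ← Finset.sum_neg_distrib]
    refine Finset.sum_congr rfl fun i _ => ?_
    have hibp : ∫ ω, ω (-unit i, i) * ((-ξ i) * ψ ω) ∂P
        = ∫ ω, ω (0, i) * ((-ξ i) * ψ (shift (unit i) ω)) ∂P := by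
      have h := integral_shift hshift (unit i)
        (fun ω => ω (-unit i, i) * ((-ξ i) * ψ ω))
      rw [← h]
      refine integral_congr_ae (Filter.Eventually.of_forall fun ω => ?_)
      simp
    calc (∫ ω, ω (0, i) * (ξ i * ψ ω) ∂P) + ∫ ω, ω (-unit i, i) * ((-ξ i) * ψ ω) ∂P
        = (∫ ω, ω (0, i) * (ξ i * ψ ω) ∂P)
            + ∫ ω, ω (0, i) * ((-ξ i) * ψ (shift (unit i) ω)) ∂P := by rw [hibp]
      _ = ∫ ω, (ω (0, i) * (ξ i * ψ ω) + ω (0, i) * ((-ξ i) * ψ (shift (unit i) ω))) ∂P :=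
          (integral_add (hint3 i) (hint4' i)).symm
      _ = ∫ ω, - (ω (0, i) * (ξ i * Dgrad ψ i ω)) ∂P :=
          integral_congr_ae (Filter.Eventually.of_forall fun ω => by simp only [Dgrad]; ring)
      _ = - ∫ ω, ω (0, i) * (ξ i * Dgrad ψ i ω) ∂P := integral_neg _
  -- assemble
  have hfinal : μ * (∫ ω, f ω * ψ ω ∂P)
      + ∑ i : Fin d, ∫ ω, ω (0, i) * (Dgrad f i ω * Dgrad ψ i ω) ∂P
      = - ∑ i : Fin d, ∫ ω, ω (0, i) * (ξ i * Dgrad ψ i ω) ∂P := by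
    rw [← hE, ← hA, hB]
    congr 1
    refine Finset.sum_congr rfl fun i _ => ?_
    rw [hC i, hD i]
  have hsplit : ∀ i : Fin d,
      ∫ ω, ω (0, i) * ((ξ i + Dgrad f i ω) * Dgrad ψ i ω) ∂P
        = (∫ ω, ω (0, i) * (ξ i * Dgrad ψ i ω) ∂P)
          + ∫ ω, ω (0, i) * (Dgrad f i ω * Dgrad ψ i ω) ∂P := by
    intro i
    rw [← integral_add (hintxD i) (hintDD i)]
    refine integral_congr_ae (Filter.Eventually.of_forall fun ω => ?_)
    ring
  calc μ * (∫ ω, f ω * ψ ω ∂P)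
      + ∑ i : Fin d, ∫ ω, ω (0, i) * ((ξ i + Dgrad f i ω) * Dgrad ψ i ω) ∂P
      = (μ * (∫ ω, f ω * ψ ω ∂P)
          + ∑ i : Fin d, ∫ ω, ω (0, i) * (Dgrad f i ω * Dgrad ψ i ω) ∂P)
        + ∑ i : Fin d, ∫ ω, ω (0, i) * (ξ i * Dgrad ψ i ω) ∂P := by
        rw [Finset.sum_congr rfl fun i _ => hsplit i, Finset.sum_add_distrib]
        ring
    _ = 0 := by rw [hfinal]; ring

end Weak

section Energy

variable {d : ℕ} {α β : ℝ} {P : Measure (Env d)} [IsProbabilityMeasure P]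

lemma quad_lower {w c x : ℝ} (hα : 0 < α) (h1 : α ≤ w) (h2 : w ≤ β) :
    -(β^2 * c^2 / (4*α)) ≤ w * ((c + x) * x) := by
  rcases le_or_gt 0 (c * x) with h | h
  · have h3 : 0 ≤ w * ((c + x) * x) := by nlinarith [sq_nonneg x]
    have h4 : 0 ≤ β^2 * c^2 / (4*α) := by positivity
    linarith
  · have hb : 0 < β := lt_of_lt_of_le hα (le_trans h1 h2)
    have key : -(β^2 * c^2 / (4*α)) ≤ α * x^2 + β * (c*x) := by
      rw [neg_le, le_div_iff₀ (by positivity : (0:ℝ) < 4*α)]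
      nlinarith [sq_nonneg (2*α*x + β*c)]
    nlinarith [sq_nonneg x, mul_le_mul_of_nonpos_right h2 h.le]

lemma energy_bound (hα : 0 < α) (hαβ : α ≤ β)
    (hsupp : ∀ᵐ ω ∂P, ∀ e, ω e ∈ Set.Icc α β)
    (hshift : ∀ z : Fin d → ℤ, MeasurePreserving (shift z) P P)
    (ξ : Fin d → ℝ) {μ : ℝ} {f : Env d → ℝ} (hf : MemLp f 2 P)
    (heq : ∀ᵐ ω ∂P, μ * f ω + genL f ω = drift ξ ω) :
    μ * ∫ ω, f ω ^ 2 ∂P ≤ ∑ i : Fin d, β^2 * ξ i^2 / (4*α) := by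
  have hw := weak_form hα hαβ hsupp hshift ξ hf heq hf
  have hint : ∀ i : Fin d,
      Integrable (fun ω => ω (0, i) * ((ξ i + Dgrad f i ω) * Dgrad f i ω)) P :=
    fun i => wmul_integrable hα hαβ hsupp _
      ((memLp_const (ξ i)).add (memLp_Dgrad hshift hf i)) (memLp_Dgrad hshift hf i)
  have hge : ∀ i : Fin d,
      -(β^2 * ξ i^2 / (4*α)) ≤ ∫ ω, ω (0, i) * ((ξ i + Dgrad f i ω) * Dgrad f i ω) ∂P := by
    intro i
    have hmono := integral_mono_ae (integrable_const (-(β^2 * ξ i^2 / (4*α)))) (hint i) ?_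
    · simpa using hmono
    · filter_upwards [hsupp] with ω h
      exact quad_lower hα (h (0,i)).1 (h (0,i)).2
  have hsum : ∑ i : Fin d, (-(β^2 * ξ i^2 / (4*α)))
      ≤ ∑ i : Fin d, ∫ ω, ω (0, i) * ((ξ i + Dgrad f i ω) * Dgrad f i ω) ∂P :=
    Finset.sum_le_sum fun i _ => hge i
  rw [Finset.sum_neg_distrib] at hsum
  have hff : ∫ ω, f ω * f ω ∂P = ∫ ω, f ω ^ 2 ∂P :=
    integral_congr_ae (Filter.Eventually.of_forall fun ω => (sq (f ω)).symm)
  rw [hff] at hw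
  linarith

end Energy

section Cross

open Filter

variable {d : ℕ} {α β : ℝ} {P : Measure (Env d)} [IsProbabilityMeasure P]

lemma tendsto_cross (hα : 0 < α) (hαβ : α ≤ β)
    (hsupp : ∀ᵐ ω ∂P, ∀ e, ω e ∈ Set.Icc α β)
    (hshift : ∀ z : Fin d → ℤ, MeasurePreserving (shift z) P P)
    (φ : ℝ → Env d → ℝ) (hφmem : ∀ ν : ℝ, 0 < ν → MemLp (φ ν) 2 P)
    (Φ : Fin d → Env d → ℝ) (hΦ : ∀ i, MemLp (Φ i) 2 P)
    (hlim : Tendsto (fun ν : ℝ => ∫ ω, ∑ i : Fin d, (Dgrad (φ ν) i ω - Φ i ω) ^ 2 ∂P)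
      (nhdsWithin 0 (Set.Ioi 0)) (nhds 0))
    (u : Fin d → Env d → ℝ) (hu : ∀ i, MemLp (u i) 2 P) :
    Tendsto (fun ν : ℝ => ∑ i : Fin d,
        ∫ ω, ω (0, i) * (u i ω * (Dgrad (φ ν) i ω - Φ i ω)) ∂P)
      (nhdsWithin 0 (Set.Ioi 0)) (nhds 0) := by
  set E : ℝ → ℝ := fun ν => ∫ ω, ∑ i : Fin d, (Dgrad (φ ν) i ω - Φ i ω) ^ 2 ∂P with hE
  set G : ℝ := ∑ i : Fin d, ∫ ω, u i ω ^ 2 ∂P with hGdef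
  have hG : 0 ≤ G := Finset.sum_nonneg fun i _ =>
    integral_nonneg fun ω => sq_nonneg _
  have hE0 : ∀ ν, 0 ≤ E ν := fun ν =>
    integral_nonneg fun ω => Finset.sum_nonneg fun i _ => sq_nonneg _
  -- the bound
  have hbound : ∀ ν : ℝ, 0 < ν →
      |∑ i : Fin d, ∫ ω, ω (0, i) * (u i ω * (Dgrad (φ ν) i ω - Φ i ω)) ∂P|
        ≤ Real.sqrt (E ν + ν) * (β * (G + d) / 2) := by
    intro ν hν
    have hδ : ∀ i, MemLp (fun ω => Dgrad (φ ν) i ω - Φ i ω) 2 P :=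
      fun i => (memLp_Dgrad hshift (hφmem ν hν) i).sub (hΦ i)
    set t : ℝ := Real.sqrt (E ν + ν) with htdef
    have ht : 0 < t := Real.sqrt_pos.mpr (by linarith [hE0 ν])
    have ht2 : t * t = E ν + ν := Real.mul_self_sqrt (by linarith [hE0 ν])
    have hEi : ∀ i : Fin d, ∫ ω, (Dgrad (φ ν) i ω - Φ i ω) ^ 2 ∂P ≤ E ν := by
      intro i
      have hsplit : E ν = ∑ i : Fin d, ∫ ω, (Dgrad (φ ν) i ω - Φ i ω) ^ 2 ∂P :=
        integral_finset_sum Finset.univ (fun i _ => (hδ i).integrable_sq)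
      rw [hsplit]
      exact Finset.single_le_sum
        (f := fun j => ∫ ω, (Dgrad (φ ν) j ω - Φ j ω) ^ 2 ∂P)
        (fun j _ => integral_nonneg fun ω => sq_nonneg _) (Finset.mem_univ i)
    have hβ : 0 ≤ β := le_trans hα.le hαβ
    calc |∑ i : Fin d, ∫ ω, ω (0, i) * (u i ω * (Dgrad (φ ν) i ω - Φ i ω)) ∂P|
        ≤ ∑ i : Fin d, |∫ ω, ω (0, i) * (u i ω * (Dgrad (φ ν) i ω - Φ i ω)) ∂P| :=
          Finset.abs_sum_le_sum_abs _ _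
      _ ≤ ∑ i : Fin d, β * ((t * ∫ ω, u i ω ^ 2 ∂P
            + (1/t) * ∫ ω, (Dgrad (φ ν) i ω - Φ i ω) ^ 2 ∂P) / 2) :=
          Finset.sum_le_sum fun i _ =>
            abs_integral_wmul_le_param hα hαβ hsupp _ (hu i) (hδ i) ht
      _ ≤ ∑ i : Fin d, t * (β * ((∫ ω, u i ω ^ 2 ∂P) + 1) / 2) := by
          refine Finset.sum_le_sum fun i _ => ?_
          have h1 : (1/t) * ∫ ω, (Dgrad (φ ν) i ω - Φ i ω) ^ 2 ∂P ≤ t := by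
            rw [div_mul_eq_mul_div, one_mul, div_le_iff₀ ht, ht2]
            linarith [hEi i]
          have h2 : 0 ≤ ∫ ω, u i ω ^ 2 ∂P := integral_nonneg fun ω => sq_nonneg _
          nlinarith
      _ = t * (β * (G + d) / 2) := by
          rw [← Finset.mul_sum]
          congr 1
          rw [← Finset.sum_div]
          congr 1
          rw [← Finset.mul_sum]
          congr 1
          rw [Finset.sum_add_distrib, Finset.sum_const, Finset.card_univ, Fintype.card_fin,
            nsmul_eq_mul, mul_one, hGdef]
  -- the squeeze
  have htend : Tendsto (fun ν : ℝ => Real.sqrt (E ν + ν) * (β * (G + d) / 2))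
      (nhdsWithin 0 (Set.Ioi 0)) (nhds 0) := by
    have h1 : Tendsto (fun ν : ℝ => E ν + ν) (nhdsWithin 0 (Set.Ioi 0)) (nhds 0) := by
      have h2 : Tendsto (fun ν : ℝ => ν) (nhdsWithin 0 (Set.Ioi 0)) (nhds 0) :=
        tendsto_id.mono_left nhdsWithin_le_nhds
      simpa using hlim.add h2
    have h3 : Tendsto (fun ν : ℝ => Real.sqrt (E ν + ν))
        (nhdsWithin 0 (Set.Ioi 0)) (nhds 0) := by
      have := (Real.continuous_sqrt.tendsto 0).comp h1
      simpa [Function.comp_def] using this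
    simpa using h3.mul_const (β * (G + d) / 2)
  refine squeeze_zero_norm' ?_ htend
  filter_upwards [self_mem_nhdsWithin] with ν hν
  simpa [Real.norm_eq_abs] using hbound ν hν

end Cross

/-- the regularized approximation of the homogenized coefficient converges
from above, with error given by the energy of the gradient difference: if `Φ` is the
L²-limit of `Dφ_μ` as `μ → 0⁺`, then for every `μ > 0`,
`E[(ξ+Dφ_μ)·A(ξ+Dφ_μ)] − E[(ξ+Φ)·A(ξ+Φ)] = E[(Dφ_μ−Φ)·A(Dφ_μ−Φ)]`; in particular
`E[(ξ+Dφ_μ)·A(ξ+Dφ_μ)] ≥ E[(ξ+Φ)·A(ξ+Φ)]`. -/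
theorem statement12 {d : ℕ} (hd : 1 ≤ d) {α β : ℝ} (hα : 0 < α) (hαβ : α ≤ β)
    (P : Measure (Env d)) [IsProbabilityMeasure P]
    (hsupp : ∀ᵐ ω ∂P, ∀ e, ω e ∈ Set.Icc α β)
    (hshift : ∀ z : Fin d → ℤ, MeasurePreserving (shift z) P P)
    (ξ : Fin d → ℝ) (φ : ℝ → Env d → ℝ)
    (hφ : ∀ μ : ℝ, 0 < μ → MemLp (φ μ) 2 P ∧
      (∀ᵐ ω ∂P, μ * φ μ ω + genL (φ μ) ω = drift ξ ω))
    (Φ : Fin d → Env d → ℝ) (hΦ : ∀ i, MemLp (Φ i) 2 P)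
    (hlim : Filter.Tendsto
      (fun μ : ℝ => ∫ ω, ∑ i : Fin d, (Dgrad (φ μ) i ω - Φ i ω) ^ 2 ∂P)
      (nhdsWithin 0 (Set.Ioi 0)) (nhds 0)) :
    ∀ μ : ℝ, 0 < μ →
      (∫ ω, ∑ i : Fin d, ω (0, i) * (ξ i + Dgrad (φ μ) i ω) ^ 2 ∂P)
          - ∫ ω, ∑ i : Fin d, ω (0, i) * (ξ i + Φ i ω) ^ 2 ∂P
        = ∫ ω, ∑ i : Fin d, ω (0, i) * (Dgrad (φ μ) i ω - Φ i ω) ^ 2 ∂P ∧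
      (∫ ω, ∑ i : Fin d, ω (0, i) * (ξ i + Φ i ω) ^ 2 ∂P)
        ≤ ∫ ω, ∑ i : Fin d, ω (0, i) * (ξ i + Dgrad (φ μ) i ω) ^ 2 ∂P := by
  have hmemφ : ∀ ν : ℝ, 0 < ν → MemLp (φ ν) 2 P := fun ν hν => (hφ ν hν).1
  have hconst : ∀ c : ℝ, MemLp (fun _ : Env d => c) 2 P := fun c => memLp_const c
  have hmemξΦ : ∀ i, MemLp (fun ω => ξ i + Φ i ω) 2 P := fun i => (hconst (ξ i)).add (hΦ i)
  -- Claim 1: for every μ₀ > 0, ∑ᵢ ∫ ω(0,i) (ξᵢ + Φᵢ) Dᵢφ_{μ₀} = 0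
  have claim1 : ∀ μ₀ : ℝ, 0 < μ₀ →
      ∑ i : Fin d, ∫ ω, ω (0, i) * ((ξ i + Φ i ω) * Dgrad (φ μ₀) i ω) ∂P = 0 := by
    intro μ₀ hμ₀
    obtain ⟨hf₀, heq₀⟩ := hφ μ₀ hμ₀
    set S : ℝ := ∑ i : Fin d, ∫ ω, ω (0, i) * ((ξ i + Φ i ω) * Dgrad (φ μ₀) i ω) ∂P with hSdef
    -- the weak form gives the value of the approximating quantity
    have hweak : ∀ ν : ℝ, 0 < ν →
        (∑ i : Fin d, ∫ ω, ω (0, i) * ((ξ i + Dgrad (φ ν) i ω) * Dgrad (φ μ₀) i ω) ∂P)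
          = -(ν * ∫ ω, φ ν ω * φ μ₀ ω ∂P) := by
      intro ν hν
      have := weak_form hα hαβ hsupp hshift ξ (hφ ν hν).1 (hφ ν hν).2 hf₀
      linarith
    -- integrability
    have hint_a : ∀ i : Fin d,
        Integrable (fun ω => ω (0, i) * ((ξ i + Φ i ω) * Dgrad (φ μ₀) i ω)) P :=
      fun i => wmul_integrable hα hαβ hsupp _ (hmemξΦ i) (memLp_Dgrad hshift hf₀ i)
    have hint_b : ∀ (ν : ℝ), 0 < ν → ∀ i : Fin d,
        Integrable (fun ω => ω (0, i) * (Dgrad (φ μ₀) i ω * (Dgrad (φ ν) i ω - Φ i ω))) P :=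
      fun ν hν i => wmul_integrable hα hαβ hsupp _ (memLp_Dgrad hshift hf₀ i)
        ((memLp_Dgrad hshift (hmemφ ν hν) i).sub (hΦ i))
    have hint_c : ∀ (ν : ℝ), 0 < ν → ∀ i : Fin d,
        Integrable (fun ω => ω (0, i) * ((ξ i + Dgrad (φ ν) i ω) * Dgrad (φ μ₀) i ω)) P :=
      fun ν hν i => wmul_integrable hα hαβ hsupp _
        ((hconst (ξ i)).add (memLp_Dgrad hshift (hmemφ ν hν) i)) (memLp_Dgrad hshift hf₀ i)
    -- decomposition
    have hdec : (fun ν : ℝ => ∑ i : Fin d,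
          ∫ ω, ω (0, i) * ((ξ i + Dgrad (φ ν) i ω) * Dgrad (φ μ₀) i ω) ∂P)
        =ᶠ[nhdsWithin 0 (Set.Ioi 0)] fun ν =>
          S + ∑ i : Fin d, ∫ ω, ω (0, i) * (Dgrad (φ μ₀) i ω * (Dgrad (φ ν) i ω - Φ i ω)) ∂P := by
      filter_upwards [self_mem_nhdsWithin] with ν hν
      rw [hSdef, ← Finset.sum_add_distrib]
      refine Finset.sum_congr rfl fun i _ => ?_
      rw [← integral_add (hint_a i) (hint_b ν hν i)]
      exact integral_congr_ae (Filter.Eventually.of_forall fun ω => by ring)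
    have hcross := tendsto_cross hα hαβ hsupp hshift φ hmemφ Φ hΦ hlim
      (fun i => Dgrad (φ μ₀) i) (fun i => memLp_Dgrad hshift hf₀ i)
    have hS1 : Tendsto (fun ν : ℝ => ∑ i : Fin d,
          ∫ ω, ω (0, i) * ((ξ i + Dgrad (φ ν) i ω) * Dgrad (φ μ₀) i ω) ∂P)
        (nhdsWithin 0 (Set.Ioi 0)) (nhds S) := by
      refine Tendsto.congr' hdec.symm ?_
      simpa using tendsto_const_nhds.add hcross
    -- the μ-term vanishes
    set C : ℝ := ∑ i : Fin d, β^2 * ξ i^2 / (4*α) with hCdef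
    set N₀ : ℝ := ∫ ω, φ μ₀ ω ^ 2 ∂P with hN₀def
    have hN₀ : 0 ≤ N₀ := integral_nonneg fun ω => sq_nonneg _
    have hbound : ∀ ν ∈ Set.Ioi (0:ℝ),
        ‖-(ν * ∫ ω, φ ν ω * φ μ₀ ω ∂P)‖ ≤ Real.sqrt ν * ((C + N₀)/2) := by
      intro ν hν
      have hν : (0:ℝ) < ν := hν
      have hNν : (0:ℝ) ≤ ∫ ω, φ ν ω ^ 2 ∂P := integral_nonneg fun ω => sq_nonneg _
      have hEB : ν * ∫ ω, φ ν ω ^ 2 ∂P ≤ C :=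
        energy_bound hα hαβ hsupp hshift ξ (hφ ν hν).1 (hφ ν hν).2
      have ht : (0:ℝ) < Real.sqrt ν := Real.sqrt_pos.mpr hν
      have ht2 : Real.sqrt ν * Real.sqrt ν = ν := Real.mul_self_sqrt hν.le
      have hI := abs_integral_mul_le_param (P := P) (hφ ν hν).1 hf₀ ht
      rw [norm_neg, Real.norm_eq_abs, abs_mul, abs_of_pos hν]
      set t := Real.sqrt ν with htdef
      set Nν := ∫ ω, φ ν ω ^ 2 ∂P with hNνdef
      calc ν * |∫ ω, φ ν ω * φ μ₀ ω ∂P|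
          ≤ ν * ((t * Nν + (1/t) * N₀)/2) := mul_le_mul_of_nonneg_left hI hν.le
        _ ≤ t * ((C + N₀)/2) := by
            rw [← ht2]
            have e3 : (t*t) * ((t*Nν + (1/t)*N₀)/2) = (t*((t*t)*Nν) + t*N₀)/2 := by
              field_simp
            rw [e3]
            have h4 : t*((t*t)*Nν) ≤ t*C := by
              rw [ht2]; exact mul_le_mul_of_nonneg_left hEB ht.le
            have h5 : 0 ≤ t*N₀ := mul_nonneg ht.le hN₀
            nlinarith
    have hto0 : Tendsto (fun ν : ℝ => -(ν * ∫ ω, φ ν ω * φ μ₀ ω ∂P))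
        (nhdsWithin 0 (Set.Ioi 0)) (nhds 0) := by
      have hsq : Tendsto (fun ν : ℝ => Real.sqrt ν) (nhdsWithin 0 (Set.Ioi 0)) (nhds 0) := by
        have := (Real.continuous_sqrt.tendsto 0).mono_left
          (nhdsWithin_le_nhds (s := Set.Ioi (0:ℝ)))
        simpa using this
      have htend : Tendsto (fun ν : ℝ => Real.sqrt ν * ((C + N₀)/2))
          (nhdsWithin 0 (Set.Ioi 0)) (nhds 0) := by
        simpa using hsq.mul_const ((C + N₀)/2)
      refine squeeze_zero_norm' ?_ htend
      filter_upwards [self_mem_nhdsWithin] with ν hν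
      exact hbound ν hν
    have hS2 : Tendsto (fun ν : ℝ => ∑ i : Fin d,
          ∫ ω, ω (0, i) * ((ξ i + Dgrad (φ ν) i ω) * Dgrad (φ μ₀) i ω) ∂P)
        (nhdsWithin 0 (Set.Ioi 0)) (nhds 0) := by
      refine Tendsto.congr' ?_ hto0
      filter_upwards [self_mem_nhdsWithin] with ν hν
      exact (hweak ν hν).symm
    exact (tendsto_nhds_unique hS1 hS2)
  -- Claim 2: ∑ᵢ ∫ ω(0,i) (ξᵢ + Φᵢ) Φᵢ = 0
  have claim2 : ∑ i : Fin d, ∫ ω, ω (0, i) * ((ξ i + Φ i ω) * Φ i ω) ∂P = 0 := by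
    set S' : ℝ := ∑ i : Fin d, ∫ ω, ω (0, i) * ((ξ i + Φ i ω) * Φ i ω) ∂P with hS'def
    have hint_a : ∀ i : Fin d,
        Integrable (fun ω => ω (0, i) * ((ξ i + Φ i ω) * Φ i ω)) P :=
      fun i => wmul_integrable hα hαβ hsupp _ (hmemξΦ i) (hΦ i)
    have hint_b : ∀ (ν : ℝ), 0 < ν → ∀ i : Fin d,
        Integrable (fun ω => ω (0, i) * ((ξ i + Φ i ω) * (Dgrad (φ ν) i ω - Φ i ω))) P :=
      fun ν hν i => wmul_integrable hα hαβ hsupp _ (hmemξΦ i)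
        ((memLp_Dgrad hshift (hmemφ ν hν) i).sub (hΦ i))
    have hdec : (fun ν : ℝ => ∑ i : Fin d,
          ∫ ω, ω (0, i) * ((ξ i + Φ i ω) * Dgrad (φ ν) i ω) ∂P)
        =ᶠ[nhdsWithin 0 (Set.Ioi 0)] fun ν =>
          S' + ∑ i : Fin d,
            ∫ ω, ω (0, i) * ((ξ i + Φ i ω) * (Dgrad (φ ν) i ω - Φ i ω)) ∂P := by
      filter_upwards [self_mem_nhdsWithin] with ν hν
      rw [hS'def, ← Finset.sum_add_distrib]
      refine Finset.sum_congr rfl fun i _ => ?_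
      rw [← integral_add (hint_a i) (hint_b ν hν i)]
      exact integral_congr_ae (Filter.Eventually.of_forall fun ω => by ring)
    have hcross := tendsto_cross hα hαβ hsupp hshift φ hmemφ Φ hΦ hlim
      (fun i ω => ξ i + Φ i ω) hmemξΦ
    have hS1 : Tendsto (fun ν : ℝ => ∑ i : Fin d,
          ∫ ω, ω (0, i) * ((ξ i + Φ i ω) * Dgrad (φ ν) i ω) ∂P)
        (nhdsWithin 0 (Set.Ioi 0)) (nhds S') := by
      refine Tendsto.congr' hdec.symm ?_
      simpa using tendsto_const_nhds.add hcross
    have hS2 : Tendsto (fun ν : ℝ => ∑ i : Fin d,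
          ∫ ω, ω (0, i) * ((ξ i + Φ i ω) * Dgrad (φ ν) i ω) ∂P)
        (nhdsWithin 0 (Set.Ioi 0)) (nhds 0) := by
      refine Tendsto.congr' ?_ tendsto_const_nhds
      filter_upwards [self_mem_nhdsWithin] with ν hν
      exact (claim1 ν hν).symm
    exact tendsto_nhds_unique hS1 hS2
  -- now the main statement
  intro μ hμ
  obtain ⟨hfμ, heqμ⟩ := hφ μ hμ
  have hgmem : ∀ i, MemLp (Dgrad (φ μ) i) 2 P := fun i => memLp_Dgrad hshift hfμ i
  have hδmem : ∀ i, MemLp (fun ω => Dgrad (φ μ) i ω - Φ i ω) 2 P :=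
    fun i => (hgmem i).sub (hΦ i)
  -- cross term vanishes
  have crosszero : ∑ i : Fin d,
      ∫ ω, ω (0, i) * ((ξ i + Φ i ω) * (Dgrad (φ μ) i ω - Φ i ω)) ∂P = 0 := by
    have hint_a : ∀ i : Fin d,
        Integrable (fun ω => ω (0, i) * ((ξ i + Φ i ω) * Dgrad (φ μ) i ω)) P :=
      fun i => wmul_integrable hα hαβ hsupp _ (hmemξΦ i) (hgmem i)
    have hint_b : ∀ i : Fin d,
        Integrable (fun ω => ω (0, i) * ((ξ i + Φ i ω) * Φ i ω)) P :=
      fun i => wmul_integrable hα hαβ hsupp _ (hmemξΦ i) (hΦ i)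
    have hsplit : ∀ i : Fin d,
        ∫ ω, ω (0, i) * ((ξ i + Φ i ω) * (Dgrad (φ μ) i ω - Φ i ω)) ∂P
          = (∫ ω, ω (0, i) * ((ξ i + Φ i ω) * Dgrad (φ μ) i ω) ∂P)
            - ∫ ω, ω (0, i) * ((ξ i + Φ i ω) * Φ i ω) ∂P := by
      intro i
      rw [← integral_sub (hint_a i) (hint_b i)]
      exact integral_congr_ae (Filter.Eventually.of_forall fun ω => by ring)
    rw [Finset.sum_congr rfl fun i _ => hsplit i, Finset.sum_sub_distrib,
      claim1 μ hμ, claim2, sub_zero]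
  -- integrability of the squared terms
  have hA : ∀ i : Fin d,
      Integrable (fun ω => ω (0, i) * (ξ i + Dgrad (φ μ) i ω) ^ 2) P := by
    intro i
    have := wmul_integrable hα hαβ hsupp ((0 : Fin d → ℤ), i)
      ((hconst (ξ i)).add (hgmem i)) ((hconst (ξ i)).add (hgmem i))
    simpa only [← pow_two, Pi.add_apply] using this
  have hB : ∀ i : Fin d,
      Integrable (fun ω => ω (0, i) * (ξ i + Φ i ω) ^ 2) P := by
    intro i
    have := wmul_integrable hα hαβ hsupp ((0 : Fin d → ℤ), i) (hmemξΦ i) (hmemξΦ i)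
    simpa only [← pow_two] using this
  have hC : ∀ i : Fin d,
      Integrable (fun ω => ω (0, i) * (Dgrad (φ μ) i ω - Φ i ω) ^ 2) P := by
    intro i
    have := wmul_integrable hα hαβ hsupp ((0 : Fin d → ℤ), i) (hδmem i) (hδmem i)
    simpa only [← pow_two] using this
  have hX : ∀ i : Fin d,
      Integrable (fun ω => ω (0, i) * ((ξ i + Φ i ω) * (Dgrad (φ μ) i ω - Φ i ω))) P :=
    fun i => wmul_integrable hα hαβ hsupp _ (hmemξΦ i) (hδmem i)
  -- swap ∫ and ∑
  have hIA : ∫ ω, ∑ i : Fin d, ω (0, i) * (ξ i + Dgrad (φ μ) i ω) ^ 2 ∂P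
      = ∑ i : Fin d, ∫ ω, ω (0, i) * (ξ i + Dgrad (φ μ) i ω) ^ 2 ∂P :=
    integral_finset_sum Finset.univ fun i _ => hA i
  have hIB : ∫ ω, ∑ i : Fin d, ω (0, i) * (ξ i + Φ i ω) ^ 2 ∂P
      = ∑ i : Fin d, ∫ ω, ω (0, i) * (ξ i + Φ i ω) ^ 2 ∂P :=
    integral_finset_sum Finset.univ fun i _ => hB i
  have hIC : ∫ ω, ∑ i : Fin d, ω (0, i) * (Dgrad (φ μ) i ω - Φ i ω) ^ 2 ∂P
      = ∑ i : Fin d, ∫ ω, ω (0, i) * (Dgrad (φ μ) i ω - Φ i ω) ^ 2 ∂P :=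
    integral_finset_sum Finset.univ fun i _ => hC i
  -- per-coordinate expansion
  have hexp : ∀ i : Fin d,
      ∫ ω, ω (0, i) * (ξ i + Dgrad (φ μ) i ω) ^ 2 ∂P
        = (∫ ω, ω (0, i) * (ξ i + Φ i ω) ^ 2 ∂P)
          + (∫ ω, ω (0, i) * (Dgrad (φ μ) i ω - Φ i ω) ^ 2 ∂P)
          + 2 * ∫ ω, ω (0, i) * ((ξ i + Φ i ω) * (Dgrad (φ μ) i ω - Φ i ω)) ∂P := by
    intro i
    calc ∫ ω, ω (0, i) * (ξ i + Dgrad (φ μ) i ω) ^ 2 ∂P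
        = ∫ ω, ((ω (0, i) * (ξ i + Φ i ω) ^ 2
            + ω (0, i) * (Dgrad (φ μ) i ω - Φ i ω) ^ 2)
            + 2 * (ω (0, i) * ((ξ i + Φ i ω) * (Dgrad (φ μ) i ω - Φ i ω)))) ∂P :=
          integral_congr_ae (Filter.Eventually.of_forall fun ω => by ring)
      _ = (∫ ω, (ω (0, i) * (ξ i + Φ i ω) ^ 2
            + ω (0, i) * (Dgrad (φ μ) i ω - Φ i ω) ^ 2) ∂P)
          + ∫ ω, 2 * (ω (0, i) * ((ξ i + Φ i ω) * (Dgrad (φ μ) i ω - Φ i ω))) ∂P :=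
          integral_add ((hB i).add (hC i)) ((hX i).const_mul 2)
      _ = (∫ ω, ω (0, i) * (ξ i + Φ i ω) ^ 2 ∂P)
          + (∫ ω, ω (0, i) * (Dgrad (φ μ) i ω - Φ i ω) ^ 2 ∂P)
          + 2 * ∫ ω, ω (0, i) * ((ξ i + Φ i ω) * (Dgrad (φ μ) i ω - Φ i ω)) ∂P := by
          rw [integral_add (hB i) (hC i), integral_const_mul]
  have hsum : ∑ i : Fin d, ∫ ω, ω (0, i) * (ξ i + Dgrad (φ μ) i ω) ^ 2 ∂P
      = (∑ i : Fin d, ∫ ω, ω (0, i) * (ξ i + Φ i ω) ^ 2 ∂P)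
        + ∑ i : Fin d, ∫ ω, ω (0, i) * (Dgrad (φ μ) i ω - Φ i ω) ^ 2 ∂P := by
    rw [Finset.sum_congr rfl fun i _ => hexp i, Finset.sum_add_distrib,
      Finset.sum_add_distrib, ← Finset.mul_sum, crosszero, mul_zero, add_zero]
  have hidentity : (∫ ω, ∑ i : Fin d, ω (0, i) * (ξ i + Dgrad (φ μ) i ω) ^ 2 ∂P)
      - ∫ ω, ∑ i : Fin d, ω (0, i) * (ξ i + Φ i ω) ^ 2 ∂P
      = ∫ ω, ∑ i : Fin d, ω (0, i) * (Dgrad (φ μ) i ω - Φ i ω) ^ 2 ∂P := by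
    rw [hIA, hIB, hIC, hsum]
    ring
  refine ⟨hidentity, ?_⟩
  have hpos : 0 ≤ ∫ ω, ∑ i : Fin d, ω (0, i) * (Dgrad (φ μ) i ω - Φ i ω) ^ 2 ∂P := by
    refine integral_nonneg_of_ae ?_
    filter_upwards [hsupp] with ω h
    refine Finset.sum_nonneg fun i _ => mul_nonneg ?_ (sq_nonneg _)
    linarith [(h (0, i)).1]
  linarith


end StochHom
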